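/- For a matroid M and disjoint subsets Q, R of E(M), there exists a minor N of M with ground set E(N) = Q ∪ R such that λ_N(Q) = κ_M(Q,R) (Tutte's linking theorem). -/

import Mathlib

open Set

variable {α : Type*}

/-- The rank of a set `X` in a matroid `M`: the supremum of cardinalities of
independent subsets of `X`. -/
noncomputable def Matroid.rk' (M : Matroid α) (X : Set α) : ℕ :=
  sSup {n | ∃ I, M.Indep I ∧ I ⊆ X ∧ I.ncard = n}

/-- The connectivity function `λ_M(X) = r(X) + r(E \ X) - r(M)`. -/
noncomputable def Matroid.lam (M : Matroid α) (X : Set α) : ℕ :=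
  M.rk' X + M.rk' (M.E \ X) - M.rk' M.E

/-- The connectivity `κ_M(Q,R)` between disjoint sets `Q` and `R`. -/
noncomputable def Matroid.kappa (M : Matroid α) (Q R : Set α) : ℕ :=
  sInf {k | ∃ X, Q ⊆ X ∧ X ⊆ M.E \ R ∧ M.lam X = k}

/-- Deletion of a set of elements. -/
def Matroid.del (M : Matroid α) (D : Set α) : Matroid α := M.restrict (M.E \ D)

/-- Contraction of a set of elements, defined via duality: `M / C = (M* \ C)*`. -/
def Matroid.con (M : Matroid α) (C : Set α) : Matroid α := (M✶.del C)✶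

/-- `N` is a minor of `M` if it is obtained by contracting a set `C` and deleting a
disjoint set `D`. -/
def Matroid.IsMinorOf (N M : Matroid α) : Prop :=
  ∃ C D, C ⊆ M.E ∧ D ⊆ M.E ∧ Disjoint C D ∧ N = (M.con C).del D

/-- `e` is deletable with respect to `(Q,R)`. -/
noncomputable def Matroid.Deletable (M : Matroid α) (Q R : Set α) (e : α) : Prop :=
  (M.del {e}).kappa Q R = M.kappa Q R

/-- `e` is contractible with respect to `(Q,R)`. -/
noncomputable def Matroid.Contractible (M : Matroid α) (Q R : Set α) (e : α) : Prop :=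
  (M.con {e}).kappa Q R = M.kappa Q R

/-- `e` is flexible with respect to `(Q,R)` if it is both deletable and contractible. -/
noncomputable def Matroid.Flexible (M : Matroid α) (Q R : Set α) (e : α) : Prop :=
  M.Deletable Q R e ∧ M.Contractible Q R e

/-- The local connectivity `⊓_M(A,B) = r(A) + r(B) - r(A ∪ B)`. -/
noncomputable def Matroid.localConn (M : Matroid α) (A B : Set α) : ℕ :=
  M.rk' A + M.rk' B - M.rk' (A ∪ B)

namespace Matroid
variable {M : Matroid α} {A B X Y I J K C D Q R : Set α} {e : α} {n : ℕ}

lemma rk'_bddAbove [M.Finite] (X : Set α) :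
    BddAbove {n | ∃ I, M.Indep I ∧ I ⊆ X ∧ I.ncard = n} := by
  refine ⟨M.E.ncard, ?_⟩
  rintro n ⟨I, hI, -, rfl⟩
  exact Set.ncard_le_ncard hI.subset_ground M.ground_finite

lemma Indep.ncard_le_rk' [M.Finite] (hI : M.Indep I) (hIX : I ⊆ X) : I.ncard ≤ M.rk' X :=
  le_csSup (rk'_bddAbove X) ⟨I, hI, hIX, rfl⟩

lemma rk'_le (h : ∀ I, M.Indep I → I ⊆ X → I.ncard ≤ n) : M.rk' X ≤ n :=
  csSup_le ⟨0, ∅, M.empty_indep, empty_subset X, Set.ncard_empty α⟩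
    (by rintro m ⟨I, hI, hIX, rfl⟩; exact h I hI hIX)

lemma IsBasis.ncard_rk' [M.Finite] (hI : M.IsBasis I X) : M.rk' X = I.ncard := by
  refine le_antisymm (rk'_le fun J hJ hJX => ?_) (hI.indep.ncard_le_rk' hI.subset)
  by_contra hlt
  push_neg at hlt
  have hIfin : I.Finite := M.set_finite I hI.indep.subset_ground
  have hJfin : J.Finite := M.set_finite J hJ.subset_ground
  have hen : I.encard < J.encard := by
    rw [← hIfin.cast_ncard_eq, ← hJfin.cast_ncard_eq]
    exact_mod_cast hlt
  obtain ⟨f, hf, hfI⟩ := hI.indep.augment hJ hen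
  have : I = insert f I :=
    hI.eq_of_subset_indep hfI (subset_insert _ _) (insert_subset (hJX hf.1) hI.subset)
  exact hf.2 (this ▸ mem_insert f I)

lemma rk'_mono [M.Finite] (h : X ⊆ Y) : M.rk' X ≤ M.rk' Y :=
  rk'_le fun I hI hIX => hI.ncard_le_rk' (hIX.trans h)

lemma rk'_empty (M : Matroid α) : M.rk' ∅ = 0 :=
  Nat.le_zero.mp (rk'_le fun I _ h => by simp [subset_empty_iff.mp h])

lemma rk'_singleton_le (M : Matroid α) (e : α) : M.rk' {e} ≤ 1 :=
  rk'_le fun I _ h =>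
    le_trans (Set.ncard_le_ncard h (finite_singleton e)) (by simp)

lemma rk'_insert_le (M : Matroid α) [M.Finite] (e : α) (X : Set α) :
    M.rk' (insert e X) ≤ M.rk' X + 1 := by
  refine rk'_le fun I hI h => ?_
  have hIfin : I.Finite := M.set_finite I hI.subset_ground
  have h1 : (I \ {e}).ncard ≤ M.rk' X := by
    refine (hI.subset diff_subset).ncard_le_rk' ?_
    rw [diff_subset_iff, singleton_union]
    exact h
  have h2 : I.ncard ≤ (I \ {e}).ncard + 1 := by
    calc I.ncard ≤ (insert e (I \ {e})).ncard :=
          Set.ncard_le_ncard (by simp [insert_diff_singleton, subset_insert])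
            (hIfin.diff.insert e)
    _ ≤ (I \ {e}).ncard + 1 := Set.ncard_insert_le _ _
  omega

lemma rk'_submod [M.Finite] (hX : X ⊆ M.E) (hY : Y ⊆ M.E) :
    M.rk' (X ∪ Y) + M.rk' (X ∩ Y) ≤ M.rk' X + M.rk' Y := by
  obtain ⟨I, hI⟩ := M.exists_isBasis (X ∩ Y) (inter_subset_left.trans hX)
  obtain ⟨J, hJ, hIJ⟩ := hI.indep.subset_isBasis_of_subset
    (hI.subset.trans (inter_subset_left.trans subset_union_left)) (union_subset hX hY)
  have hJfin : J.Finite := M.set_finite J hJ.indep.subset_ground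
  rw [hJ.ncard_rk', hI.ncard_rk']
  have h1 : (J ∩ X).ncard ≤ M.rk' X :=
    (hJ.indep.subset inter_subset_left).ncard_le_rk' inter_subset_right
  have h2 : (J ∩ Y).ncard ≤ M.rk' Y :=
    (hJ.indep.subset inter_subset_left).ncard_le_rk' inter_subset_right
  have hu : (J ∩ X) ∪ (J ∩ Y) = J := by
    rw [← inter_union_distrib_left]
    exact inter_eq_left.mpr hJ.subset
  have hIsub : I ⊆ (J ∩ X) ∩ (J ∩ Y) :=
    subset_inter (subset_inter hIJ (hI.subset.trans inter_subset_left))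
      (subset_inter hIJ (hI.subset.trans inter_subset_right))
  have hie := Set.ncard_union_add_ncard_inter (J ∩ X) (J ∩ Y)
    (hJfin.subset inter_subset_left) (hJfin.subset inter_subset_left)
  rw [hu] at hie
  have hIc : I.ncard ≤ ((J ∩ X) ∩ (J ∩ Y)).ncard :=
    Set.ncard_le_ncard hIsub ((hJfin.subset inter_subset_left).subset inter_subset_left)
  omega

lemma rk'_le_add_diff [M.Finite] (hX : X ⊆ M.E) :
    M.rk' M.E ≤ M.rk' X + M.rk' (M.E \ X) := by
  have h := rk'_submod hX (diff_subset (s := M.E) (t := X))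
  rw [union_diff_cancel hX] at h
  omega

lemma insert_indep_of_coloop [M.Finite] (hcol : M.rk' (M.E \ {e}) < M.rk' M.E)
    (hI : M.Indep I) (hIe : I ⊆ M.E \ {e}) : M.Indep (insert e I) := by
  obtain ⟨I', hI', hII'⟩ := hI.subset_isBasis_of_subset hIe diff_subset
  obtain ⟨B, hB⟩ := M.exists_isBase
  have hI'nb : ¬ M.IsBase I' := by
    intro hb
    have h1 : M.rk' M.E = I'.ncard := (isBasis_ground_iff.mpr hb).ncard_rk'
    have h2 : M.rk' (M.E \ {e}) = I'.ncard := hI'.ncard_rk'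
    omega
  obtain ⟨f, hf, hfI⟩ := hI'.indep.exists_insert_of_not_isBase hI'nb hB
  have hfe : f = e := by
    by_contra hne
    have hsub : insert f I' ⊆ M.E \ {e} :=
      insert_subset ⟨hB.subset_ground hf.1, hne⟩ hI'.subset
    have hle := hfI.ncard_le_rk' hsub
    rw [Set.ncard_insert_of_notMem hf.2 (M.set_finite I' hI'.indep.subset_ground),
      ← hI'.ncard_rk'] at hle
    omega
  rw [hfe] at hfI
  exact hfI.subset (insert_subset_insert hII')

lemma coloop_rk' [M.Finite] (hcol : M.rk' (M.E \ {e}) < M.rk' M.E)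
    (heA : e ∈ A) (hA : A ⊆ M.E) : M.rk' A = M.rk' (A \ {e}) + 1 := by
  refine le_antisymm ?_ ?_
  · calc M.rk' A ≤ M.rk' (insert e (A \ {e})) :=
        rk'_mono (by rw [insert_diff_singleton]; exact subset_insert _ _)
    _ ≤ M.rk' (A \ {e}) + 1 := M.rk'_insert_le e _
  · obtain ⟨I, hI⟩ := M.exists_isBasis (A \ {e}) (diff_subset.trans hA)
    have hind : M.Indep (insert e I) :=
      insert_indep_of_coloop hcol hI.indep
        (hI.subset.trans (diff_subset_diff_left hA))
    have heI : e ∉ I := fun h => (hI.subset h).2 rfl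
    have hle := hind.ncard_le_rk' (X := A)
      (insert_subset heA (hI.subset.trans diff_subset))
    rw [Set.ncard_insert_of_notMem heI (M.set_finite I hI.indep.subset_ground),
      ← hI.ncard_rk'] at hle
    exact hle



end Matroid


namespace Matroid
variable {M N : Matroid α} {A B X Y I J K C D Q R : Set α} {e : α} {n : ℕ}

@[simp] lemma del_ground (M : Matroid α) (D : Set α) : (M.del D).E = M.E \ D := rfl

@[simp] lemma con_ground (M : Matroid α) (C : Set α) : (M.con C).E = M.E \ C := rfl

lemma del_finite [M.Finite] (D : Set α) : (M.del D).Finite :=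
  ⟨M.ground_finite.subset diff_subset⟩

lemma con_finite [M.Finite] (C : Set α) : (M.con C).Finite :=
  ⟨M.ground_finite.subset diff_subset⟩

@[simp] lemma del_indep_iff : (M.del D).Indep I ↔ M.Indep I ∧ I ⊆ M.E \ D :=
  restrict_indep_iff

lemma del_rk' (hX : X ⊆ M.E \ D) : (M.del D).rk' X = M.rk' X := by
  unfold rk'
  congr 1
  ext n
  constructor
  · rintro ⟨I, hI, hIX, rfl⟩
    exact ⟨I, (del_indep_iff.mp hI).1, hIX, rfl⟩
  · rintro ⟨I, hI, hIX, rfl⟩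
    exact ⟨I, del_indep_iff.mpr ⟨hI, hIX.trans hX⟩, hIX, rfl⟩

lemma indep_union_basis_exchange [M.Finite] (hK : M.IsBasis K C) (hJ : M.IsBasis J C)
    (hIC : Disjoint I C) (hind : M.Indep (I ∪ K)) : M.Indep (I ∪ J) := by
  have hIE : I ⊆ M.E := (subset_union_left (t := K)).trans hind.subset_ground
  have hICE : I ∪ C ⊆ M.E := union_subset hIE hJ.subset_ground
  obtain ⟨B₁, hB₁, hJB₁⟩ := hJ.indep.subset_isBasis_of_subset
    (hJ.subset.trans subset_union_right) hICE
  obtain ⟨B₂, hB₂, hKB₂⟩ := hind.subset_isBasis_of_subset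
    (union_subset_union_right I hK.subset) hICE
  have hfin : ∀ Z, Z ⊆ M.E → Z.Finite := fun Z h => M.ground_finite.subset h
  -- B₁ ∩ C = J
  have hB₁C : B₁ ∩ C = J := by
    refine (hJ.eq_of_subset_indep (hB₁.indep.subset inter_subset_left)
      (subset_inter hJB₁ hJ.subset) inter_subset_right).symm
  -- B₂ = I ∪ K
  have hB₂C : B₂ ∩ C = K := by
    refine (hK.eq_of_subset_indep (hB₂.indep.subset inter_subset_left)
      (subset_inter ((subset_union_right (s := I)).trans hKB₂) hK.subset)
      inter_subset_right).symm
  have hB₂eq : B₂ = I ∪ K := by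
    refine subset_antisymm ?_ hKB₂
    intro x hx
    rcases hB₂.subset hx with hxI | hxC
    · exact Or.inl hxI
    · exact Or.inr (hB₂C ▸ ⟨hx, hxC⟩)
  have hB₁sub : B₁ ⊆ I ∪ J := by
    intro x hx
    rcases hB₁.subset hx with hxI | hxC
    · exact Or.inl hxI
    · exact Or.inr (hB₁C ▸ ⟨hx, hxC⟩)
  have hcard : B₁.ncard = B₂.ncard := by
    have := hB₁.encard_eq_encard hB₂
    rw [Set.ncard_def, Set.ncard_def, this]
  have hJK : J.ncard = K.ncard := by
    have := hJ.encard_eq_encard hK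
    rw [Set.ncard_def, Set.ncard_def, this]
  have hdisjK : Disjoint I K := hIC.mono_right hK.subset
  have hdisjJ : Disjoint I J := hIC.mono_right hJ.subset
  have hB₂card : B₂.ncard = I.ncard + K.ncard := by
    rw [hB₂eq, Set.ncard_union_eq hdisjK (hfin I hIE) (hfin K hK.indep.subset_ground)]
  have hIJcard : (I ∪ J).ncard ≤ I.ncard + J.ncard :=
    Set.ncard_union_le I J
  have hIJfin : (I ∪ J).Finite := (hfin I hIE).union (hfin J hJ.indep.subset_ground)
  have : B₁ = I ∪ J := Set.eq_of_subset_of_ncard_le hB₁sub (by omega) hIJfin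
  exact this ▸ hB₁.indep

lemma con_indep_iff [M.Finite] (hC : C ⊆ M.E) (hJ : M.IsBasis J C) (hIEC : I ⊆ M.E \ C) :
    (M.con C).Indep I ↔ M.Indep (I ∪ J) := by
  have hground : (M✶.del C).E = M.E \ C := by simp
  have hbase : ∀ B, (M✶.del C).IsBase B ↔ M✶.IsBasis B (M.E \ C) := by
    intro B
    exact isBase_restrict_iff (X := M✶.E \ C) diff_subset
  rw [show M.con C = (M✶.del C)✶ from rfl, dual_indep_iff_exists' ]
  rw [hground]
  constructor
  · rintro ⟨hIsub, B, hB, hdisj⟩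
    rw [hbase] at hB
    obtain ⟨B', hB', hBB'⟩ := hB.indep.exists_isBase_superset
    have hBeq : B' ∩ (M.E \ C) = B :=
      (hB.eq_of_subset_indep (hB'.indep.subset inter_subset_left)
        (subset_inter hBB' hB.subset) inter_subset_right).symm
    have hBasisC : M.IsBasis ((M.E \ B') ∩ C) C := by
      have h := (hB'.inter_isBasis_iff_compl_inter_isBasis_dual
        (X := M.E \ C) diff_subset).mp (hBeq ▸ hB)
      rwa [show M✶.E = M.E from rfl, diff_diff_cancel_left hC, dual_dual] at h
    have hIB₀ : I ⊆ M.E \ B' := by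
      intro x hx
      refine ⟨(hIEC hx).1, fun hxB' => ?_⟩
      exact hdisj.ne_of_mem hx (hBeq ▸ ⟨hxB', hIEC hx⟩) rfl
    have hind : M.Indep (I ∪ (M.E \ B') ∩ C) :=
      hB'.compl_isBase_of_dual.indep.subset (union_subset hIB₀ inter_subset_left)
    exact indep_union_basis_exchange hBasisC hJ
      ((subset_diff.mp hIEC).2) hind
  · intro hind
    obtain ⟨B₀, hB₀, hsub⟩ := hind.exists_isBase_superset
    have hB₀C : B₀ ∩ C = J :=
      (hJ.eq_of_subset_indep (hB₀.indep.subset inter_subset_left)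
        (subset_inter ((subset_union_right (s := I)).trans hsub) hJ.subset)
        inter_subset_right).symm
    have hbasis : M✶.IsBasis ((M.E \ B₀) ∩ (M.E \ C)) (M.E \ C) :=
      hB₀.compl_inter_isBasis_of_inter_isBasis (hB₀C ▸ hJ)
    refine ⟨hIEC, (M.E \ B₀) ∩ (M.E \ C), (hbase _).mpr hbasis, ?_⟩
    exact Disjoint.mono_right inter_subset_left
      (disjoint_sdiff_right.mono_left ((subset_union_left (t := J)).trans hsub))


lemma basis_of_con_basis [M.Finite] (hC : C ⊆ M.E) (hJ : M.IsBasis J C) (hX : X ⊆ M.E \ C)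
    (hI : (M.con C).IsBasis I X) : M.IsBasis (I ∪ J) (X ∪ C) := by
  have hIX : I ⊆ X := hI.subset
  have hIEC : I ⊆ M.E \ C := hIX.trans hX
  have hind : M.Indep (I ∪ J) := (con_indep_iff hC hJ hIEC).mp hI.indep
  refine hind.isBasis_of_forall_insert (union_subset_union hIX hJ.subset) ?_
  rintro x ⟨hxXC, hxIJ⟩
  have hxE : x ∈ M.E := by
    rcases hxXC with h | h
    · exact (hX h).1
    · exact hC h
  refine dep_iff.mpr ⟨fun hxind => ?_, insert_subset hxE hind.subset_ground⟩
  rcases hxXC with hxX | hxC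
  · have hxI : x ∉ I := fun h => hxIJ (Or.inl h)
    have hins : M.Indep (insert x I ∪ J) := by
      rwa [show insert x (I ∪ J) = insert x I ∪ J from by rw [insert_union]] at hxind
    have hcon : (M.con C).Indep (insert x I) :=
      (con_indep_iff hC hJ (insert_subset (hX hxX) hIEC)).mpr hins
    have := hI.eq_of_subset_indep hcon (subset_insert x I) (insert_subset hxX hIX)
    exact hxI (this ▸ mem_insert x I)
  · have hxJ : x ∉ J := fun h => hxIJ (Or.inr h)
    have hins : M.Indep (insert x J) :=
      hxind.subset (insert_subset_insert subset_union_right)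
    have := hJ.eq_of_subset_indep hins (subset_insert x J) (insert_subset hxC hJ.subset)
    exact hxJ (this ▸ mem_insert x J)

lemma con_rk'_add [M.Finite] (hC : C ⊆ M.E) (hX : X ⊆ M.E \ C) :
    (M.con C).rk' X + M.rk' C = M.rk' (X ∪ C) := by
  obtain ⟨J, hJ⟩ := M.exists_isBasis C hC
  haveI := con_finite (M := M) C
  obtain ⟨I, hI⟩ := (M.con C).exists_isBasis X (by rwa [con_ground])
  have hbasis := basis_of_con_basis hC hJ hX hI
  have hdisj : Disjoint I J :=
    (disjoint_sdiff_left.mono_left (hI.subset.trans hX)).mono_right hJ.subset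
  rw [hI.ncard_rk', hJ.ncard_rk', hbasis.ncard_rk',
    Set.ncard_union_eq hdisj
      (M.ground_finite.subset ((hI.subset.trans hX).trans diff_subset))
      (M.ground_finite.subset hJ.indep.subset_ground)]

lemma del_del (M : Matroid α) (D₁ D₂ : Set α) : (M.del D₁).del D₂ = M.del (D₁ ∪ D₂) := by
  show (M ↾ (M.E \ D₁)) ↾ ((M ↾ (M.E \ D₁)).E \ D₂) = M ↾ (M.E \ (D₁ ∪ D₂))
  rw [restrict_ground_eq, diff_diff,
    restrict_restrict_eq M (diff_subset_diff_right subset_union_left)]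

@[simp] lemma dual_con (M : Matroid α) (C : Set α) : (M.con C)✶ = M✶.del C := by
  rw [show M.con C = (M✶.del C)✶ from rfl, dual_dual]

lemma con_con (M : Matroid α) (C₁ C₂ : Set α) : (M.con C₁).con C₂ = M.con (C₁ ∪ C₂) := by
  rw [show (M.con C₁).con C₂ = ((M.con C₁)✶.del C₂)✶ from rfl, dual_con, del_del]
  rfl

@[simp] lemma del_empty (M : Matroid α) : M.del ∅ = M := by
  rw [del, diff_empty, restrict_ground_eq_self]

@[simp] lemma con_empty (M : Matroid α) : M.con ∅ = M := by
  rw [con, del_empty, dual_dual]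


lemma del_con_comm [M.Finite] (hC : C ⊆ M.E) (hCD : Disjoint C D) :
    (M.del D).con C = (M.con C).del D := by
  haveI := del_finite (M := M) D
  obtain ⟨J, hJ⟩ := M.exists_isBasis C hC
  have hCsub : C ⊆ M.E \ D := subset_diff.mpr ⟨hC, hCD⟩
  have hJD : (M.del D).IsBasis J C := by
    rw [del, isBasis_restrict_iff diff_subset]; exact ⟨hJ, hCsub⟩
  rw [ext_iff_indep]
  refine ⟨by simp [diff_diff_comm], fun I hI => ?_⟩
  rw [con_ground, del_ground] at hI
  have hI1 : I ⊆ (M.del D).E \ C := by rw [del_ground]; exact hI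
  have hIE : I ⊆ M.E \ C := fun x hx => ⟨((hI hx).1).1, (hI hx).2⟩
  rw [con_indep_iff (M := M.del D) (by rw [del_ground]; exact hCsub) hJD hI1,
    del_indep_iff, del_indep_iff, con_indep_iff hC hJ hIE, con_ground]
  constructor
  · rintro ⟨h, -⟩
    exact ⟨h, fun x hx => ⟨⟨((hI hx).1).1, (hI hx).2⟩, ((hI hx).1).2⟩⟩
  · rintro ⟨h, -⟩
    exact ⟨h, union_subset (fun x hx => (hI hx).1) (hJ.subset.trans hCsub)⟩

end Matroid


namespace Matroid
variable {M N : Matroid α} {A B X Y I J K C D Q R : Set α} {e : α} {n : ℕ}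

lemma minor_refl (M : Matroid α) : M.IsMinorOf M :=
  ⟨∅, ∅, empty_subset _, empty_subset _, disjoint_empty _, by rw [con_empty, del_empty]⟩

lemma minor_of_minor_del [M.Finite] (heE : e ∈ M.E) (h : N.IsMinorOf (M.del {e})) :
    N.IsMinorOf M := by
  obtain ⟨C, D, hC, hD, hCD, rfl⟩ := h
  rw [del_ground] at hC hD
  have heC : Disjoint C {e} := disjoint_singleton_right.mpr fun h => (hC h).2 rfl
  rw [show (M.del {e}).con C = (M.con C).del {e} from
    del_con_comm (fun x hx => (hC hx).1) heC, del_del]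
  exact ⟨C, {e} ∪ D, fun x hx => (hC hx).1,
    union_subset (singleton_subset_iff.mpr heE) (fun x hx => (hD hx).1),
    disjoint_union_right.mpr ⟨heC, hCD⟩, rfl⟩

lemma minor_of_minor_con (heE : e ∈ M.E) (h : N.IsMinorOf (M.con {e})) :
    N.IsMinorOf M := by
  obtain ⟨C, D, hC, hD, hCD, rfl⟩ := h
  rw [con_ground] at hC hD
  rw [con_con]
  exact ⟨{e} ∪ C, D, union_subset (singleton_subset_iff.mpr heE) (fun x hx => (hC hx).1),
    fun x hx => (hD hx).1,
    disjoint_union_left.mpr ⟨disjoint_singleton_left.mpr (fun h => (hD h).2 rfl), hCD⟩, rfl⟩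


lemma lam_cast [M.Finite] (hX : X ⊆ M.E) :
    (M.lam X : ℤ) = (M.rk' X : ℤ) + M.rk' (M.E \ X) - M.rk' M.E := by
  have h := rk'_le_add_diff hX
  unfold lam
  omega

lemma lam_del_eq [M.Finite] (heE : e ∈ M.E) (hX : X ⊆ M.E \ {e}) :
    ((M.del {e}).lam X : ℤ) =
      (M.rk' X : ℤ) + M.rk' (M.E \ (X ∪ {e})) - M.rk' (M.E \ {e}) := by
  haveI := del_finite (M := M) {e}
  rw [lam_cast (M := M.del {e}) (by rw [del_ground]; exact hX), del_ground,
    del_rk' hX, del_rk' (diff_subset : (M.E \ {e}) \ X ⊆ M.E \ {e}),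
    del_rk' (Subset.rfl : M.E \ {e} ⊆ M.E \ {e}), diff_diff_comm, diff_diff]

lemma lam_con_eq [M.Finite] (heE : e ∈ M.E) (hX : X ⊆ M.E \ {e}) :
    ((M.con {e}).lam X : ℤ) =
      (M.rk' (X ∪ {e}) : ℤ) + M.rk' (M.E \ X) - M.rk' M.E - M.rk' {e} := by
  haveI := con_finite (M := M) {e}
  have hsing : {e} ⊆ M.E := singleton_subset_iff.mpr heE
  have heX : e ∉ X := fun h => (hX h).2 rfl
  have h1 := con_rk'_add (C := {e}) hsing hX
  have h2 := con_rk'_add (C := {e}) hsing (diff_subset : (M.E \ {e}) \ X ⊆ M.E \ {e})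
  have h3 := con_rk'_add (C := {e}) hsing (Subset.rfl : M.E \ {e} ⊆ M.E \ {e})
  have he1 : ((M.E \ {e}) \ X) ∪ {e} = M.E \ X := by
    ext x
    simp only [mem_union, mem_diff, mem_singleton_iff]
    constructor
    · rintro (⟨⟨hxE, hne⟩, hnX⟩ | rfl)
      exacts [⟨hxE, hnX⟩, ⟨heE, heX⟩]
    · rintro ⟨hxE, hnX⟩
      by_cases hxe : x = e
      · exact Or.inr hxe
      · exact Or.inl ⟨⟨hxE, hxe⟩, hnX⟩
  have he2 : (M.E \ {e}) ∪ {e} = M.E := by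
    rw [diff_union_self, union_eq_self_of_subset_right hsing]
  rw [he1] at h2
  rw [he2] at h3
  rw [lam_cast (M := M.con {e}) (by rw [con_ground]; exact hX), con_ground]
  omega

lemma kappa_le (hXQ : Q ⊆ X) (hXR : X ⊆ M.E \ R) : M.kappa Q R ≤ M.lam X :=
  Nat.sInf_le ⟨X, hXQ, hXR, rfl⟩

lemma exists_lam_eq_kappa (hQ : Q ⊆ M.E) (hQR : Disjoint Q R) :
    ∃ X, Q ⊆ X ∧ X ⊆ M.E \ R ∧ M.lam X = M.kappa Q R :=
  Nat.sInf_mem (⟨M.lam Q, Q, Subset.rfl, subset_diff.mpr ⟨hQ, hQR⟩, rfl⟩ :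
    {k | ∃ X, Q ⊆ X ∧ X ⊆ M.E \ R ∧ M.lam X = k}.Nonempty)


lemma kappa_del_le [M.Finite] (hQ : Q ⊆ M.E) (hQR : Disjoint Q R)
    (heE : e ∈ M.E) (heQR : e ∉ Q ∪ R) : (M.del {e}).kappa Q R ≤ M.kappa Q R := by
  obtain ⟨X₀, hQX, hXR, hlam⟩ := exists_lam_eq_kappa hQ hQR
  haveI := del_finite (M := M) {e}
  have hX₀E : X₀ ⊆ M.E := hXR.trans diff_subset
  have hQX' : Q ⊆ X₀ \ {e} := subset_diff_singleton hQX (fun h => heQR (Or.inl h))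
  have hX'sub : X₀ \ {e} ⊆ (M.del {e}).E \ R := by
    rw [del_ground]
    intro x hx
    exact ⟨⟨(hXR hx.1).1, hx.2⟩, (hXR hx.1).2⟩
  refine le_trans (kappa_le hQX' hX'sub) ?_
  rw [← hlam]
  have key : ((M.del {e}).lam (X₀ \ {e}) : ℤ) ≤ (M.lam X₀ : ℤ) := by
    rw [lam_del_eq heE (diff_subset_diff_left hX₀E), lam_cast hX₀E, diff_union_self,
      show M.E \ (X₀ ∪ {e}) = (M.E \ X₀) \ {e} from by rw [← diff_diff]]
    have h1 : M.rk' (X₀ \ {e}) ≤ M.rk' X₀ := rk'_mono diff_subset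
    have h2 : M.rk' ((M.E \ X₀) \ {e}) ≤ M.rk' (M.E \ X₀) := rk'_mono diff_subset
    have h3 : M.rk' (M.E \ {e}) ≤ M.rk' M.E := rk'_mono diff_subset
    by_cases hcol : M.rk' (M.E \ {e}) < M.rk' M.E
    · by_cases heX : e ∈ X₀
      · have hc1 : M.rk' X₀ = M.rk' (X₀ \ {e}) + 1 := coloop_rk' hcol heX hX₀E
        have he2 : (M.E \ X₀) \ {e} = M.E \ X₀ :=
          diff_singleton_eq_self (fun h => h.2 heX)
        rw [he2]
        have h4 : M.rk' M.E ≤ M.rk' (M.E \ {e}) + 1 := by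
          calc M.rk' M.E ≤ M.rk' (insert e (M.E \ {e})) :=
                rk'_mono (by rw [insert_diff_singleton]; exact subset_insert _ _)
          _ ≤ M.rk' (M.E \ {e}) + 1 := M.rk'_insert_le e _
        omega
      · have hX₀e : X₀ \ {e} = X₀ := diff_singleton_eq_self heX
        have hc1 : M.rk' (M.E \ X₀) = M.rk' ((M.E \ X₀) \ {e}) + 1 :=
          coloop_rk' hcol ⟨heE, heX⟩ diff_subset
        rw [hX₀e]
        have h4 : M.rk' M.E ≤ M.rk' (M.E \ {e}) + 1 := by
          calc M.rk' M.E ≤ M.rk' (insert e (M.E \ {e})) :=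
                rk'_mono (by rw [insert_diff_singleton]; exact subset_insert _ _)
          _ ≤ M.rk' (M.E \ {e}) + 1 := M.rk'_insert_le e _
        omega
    · have heq : M.rk' (M.E \ {e}) = M.rk' M.E := le_antisymm h3 (not_lt.mp hcol)
      omega
  exact_mod_cast key

lemma kappa_con_le [M.Finite] (hQ : Q ⊆ M.E) (hQR : Disjoint Q R)
    (heE : e ∈ M.E) (heQR : e ∉ Q ∪ R) : (M.con {e}).kappa Q R ≤ M.kappa Q R := by
  obtain ⟨X₀, hQX, hXR, hlam⟩ := exists_lam_eq_kappa hQ hQR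
  haveI := con_finite (M := M) {e}
  have hsing : {e} ⊆ M.E := singleton_subset_iff.mpr heE
  have hX₀E : X₀ ⊆ M.E := hXR.trans diff_subset
  have hQX' : Q ⊆ X₀ \ {e} := subset_diff_singleton hQX (fun h => heQR (Or.inl h))
  have hX'sub : X₀ \ {e} ⊆ (M.con {e}).E \ R := by
    rw [con_ground]
    intro x hx
    exact ⟨⟨(hXR hx.1).1, hx.2⟩, (hXR hx.1).2⟩
  refine le_trans (kappa_le hQX' hX'sub) ?_
  rw [← hlam]
  have key : ((M.con {e}).lam (X₀ \ {e}) : ℤ) ≤ (M.lam X₀ : ℤ) := by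
    rw [lam_con_eq heE (diff_subset_diff_left hX₀E), lam_cast hX₀E, diff_union_self]
    have hsub1 := rk'_submod hX₀E hsing
    have hsub2 := rk'_submod (diff_subset : M.E \ X₀ ⊆ M.E) hsing
    by_cases heX : e ∈ X₀
    · have hXe : X₀ ∪ {e} = X₀ := union_eq_self_of_subset_right (singleton_subset_iff.mpr heX)
      have hdiff : M.E \ (X₀ \ {e}) = (M.E \ X₀) ∪ {e} := by
        ext x
        simp only [mem_union, mem_diff, mem_singleton_iff]
        constructor
        · rintro ⟨hxE, hx⟩
          by_cases hxe : x = e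
          · exact Or.inr hxe
          · exact Or.inl ⟨hxE, fun hX => hx ⟨hX, hxe⟩⟩
        · rintro (⟨hxE, hx⟩ | rfl)
          · exact ⟨hxE, fun h => hx h.1⟩
          · exact ⟨heE, fun h => h.2 rfl⟩
      rw [hXe, hdiff]
      omega
    · have hX₀e : X₀ \ {e} = X₀ := diff_singleton_eq_self heX
      rw [hX₀e]
      omega
  exact_mod_cast key

lemma kappa_del_or_con [M.Finite] (hQ : Q ⊆ M.E) (hR : R ⊆ M.E) (hQR : Disjoint Q R)
    (heE : e ∈ M.E) (heQR : e ∉ Q ∪ R) :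
    M.kappa Q R ≤ (M.del {e}).kappa Q R ∨ M.kappa Q R ≤ (M.con {e}).kappa Q R := by
  by_contra hcon
  push_neg at hcon
  obtain ⟨hd, hc⟩ := hcon
  haveI := del_finite (M := M) {e}
  haveI := con_finite (M := M) {e}
  have heQ : e ∉ Q := fun h => heQR (Or.inl h)
  have heR : e ∉ R := fun h => heQR (Or.inr h)
  have hQ' : Q ⊆ M.E \ {e} := subset_diff_singleton hQ heQ
  obtain ⟨X, hQX, hXsub, hXlam⟩ :=
    exists_lam_eq_kappa (M := M.del {e}) (by rw [del_ground]; exact hQ') hQR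
  obtain ⟨Y, hQY, hYsub, hYlam⟩ :=
    exists_lam_eq_kappa (M := M.con {e}) (by rw [con_ground]; exact hQ') hQR
  rw [del_ground] at hXsub
  rw [con_ground] at hYsub
  have hXE' : X ⊆ M.E \ {e} := hXsub.trans diff_subset
  have hYE' : Y ⊆ M.E \ {e} := hYsub.trans diff_subset
  have hXE : X ⊆ M.E := hXE'.trans diff_subset
  have hYE : Y ⊆ M.E := hYE'.trans diff_subset
  have heX : e ∉ X := fun h => (hXE' h).2 rfl
  have heY : e ∉ Y := fun h => (hYE' h).2 rfl
  have hX2 : ((M.del {e}).lam X : ℤ) ≤ (M.kappa Q R : ℤ) - 1 := by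
    rw [hXlam]
    have := hd
    omega
  have hY2 : ((M.con {e}).lam Y : ℤ) ≤ (M.kappa Q R : ℤ) - 1 := by
    rw [hYlam]
    have := hc
    omega
  rw [lam_del_eq heE hXE'] at hX2
  rw [lam_con_eq heE hYE'] at hY2
  have hsing : {e} ⊆ M.E := singleton_subset_iff.mpr heE
  -- submodular inequalities
  have s1 := rk'_submod hXE (union_subset hYE hsing)
  have idA : X ∩ (Y ∪ {e}) = X ∩ Y := by
    ext x
    simp only [mem_inter_iff, mem_union, mem_singleton_iff]
    constructor
    · rintro ⟨hx, hy | rfl⟩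
      · exact ⟨hx, hy⟩
      · exact absurd hx heX
    · rintro ⟨hx, hy⟩
      exact ⟨hx, Or.inl hy⟩
  have idB : X ∪ (Y ∪ {e}) = X ∪ Y ∪ {e} := (union_assoc X Y {e}).symm
  rw [idA, idB] at s1
  have s2 := rk'_submod (diff_subset : M.E \ (X ∪ {e}) ⊆ M.E) (diff_subset : M.E \ Y ⊆ M.E)
  have idC : M.E \ (X ∪ {e}) ∪ M.E \ Y = M.E \ (X ∩ Y) := by
    rw [← diff_inter]
    congr 1
    ext x
    simp only [mem_inter_iff, mem_union, mem_singleton_iff]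
    constructor
    · rintro ⟨hx | rfl, hy⟩
      · exact ⟨hx, hy⟩
      · exact absurd hy heY
    · rintro ⟨hx, hy⟩
      exact ⟨Or.inl hx, hy⟩
  have idD : M.E \ (X ∪ {e}) ∩ (M.E \ Y) = M.E \ (X ∪ Y ∪ {e}) := by
    rw [diff_inter_diff]
    congr 1
    rw [union_right_comm]
  rw [idC, idD] at s2
  -- kappa lower bounds
  have hIQ : Q ⊆ X ∩ Y := subset_inter hQX hQY
  have hIsub : X ∩ Y ⊆ M.E \ R := fun x hx => ⟨(hXE hx.1), ((hXsub hx.1).2)⟩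
  have hUQ : Q ⊆ X ∪ Y ∪ {e} := hQX.trans ((subset_union_left).trans subset_union_left)
  have hUsub : X ∪ Y ∪ {e} ⊆ M.E \ R := by
    refine union_subset (union_subset ?_ ?_) ?_
    · exact fun x hx => ⟨hXE hx, (hXsub hx).2⟩
    · exact fun x hx => ⟨hYE hx, (hYsub hx).2⟩
    · exact singleton_subset_iff.mpr ⟨heE, heR⟩
  have k1 : (M.kappa Q R : ℤ) ≤ (M.lam (X ∩ Y) : ℤ) := by exact_mod_cast kappa_le hIQ hIsub
  have k2 : (M.kappa Q R : ℤ) ≤ (M.lam (X ∪ Y ∪ {e}) : ℤ) := by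
    exact_mod_cast kappa_le hUQ hUsub
  rw [lam_cast (inter_subset_left.trans hXE)] at k1
  rw [lam_cast (hUsub.trans diff_subset)] at k2
  have m1 : M.rk' (M.E \ {e}) ≤ M.rk' M.E := rk'_mono diff_subset
  have m2 : M.rk' {e} ≤ 1 := M.rk'_singleton_le e
  omega



end Matroid

open Matroid in
theorem stmt_2 (M : Matroid α) [M.Finite] (Q R : Set α) (hQ : Q ⊆ M.E) (hR : R ⊆ M.E)
    (hQR : Disjoint Q R) :
    ∃ N : Matroid α, N.IsMinorOf M ∧ N.E = Q ∪ R ∧ N.lam Q = M.kappa Q R := by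
  suffices h : ∀ n (M : Matroid α), M.Finite → ∀ Q R : Set α, Q ⊆ M.E → R ⊆ M.E →
      Disjoint Q R → (M.E \ (Q ∪ R)).ncard = n →
      ∃ N : Matroid α, N.IsMinorOf M ∧ N.E = Q ∪ R ∧ N.lam Q = M.kappa Q R by
    exact h _ M ‹_› Q R hQ hR hQR rfl
  intro n
  induction n using Nat.strong_induction_on with
  | _ n IH =>
    intro M hMfin Q R hQ hR hQR hcard
    haveI := hMfin
    by_cases hE : M.E ⊆ Q ∪ R
    · refine ⟨M, minor_refl M, subset_antisymm hE (union_subset hQ hR), ?_⟩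
      have hER : M.E \ R = Q := by
        apply subset_antisymm
        · intro x hx
          rcases hE hx.1 with h | h
          · exact h
          · exact absurd h hx.2
        · exact subset_diff.mpr ⟨hQ, hQR⟩
      have hset : {k | ∃ X, Q ⊆ X ∧ X ⊆ M.E \ R ∧ M.lam X = k} = {M.lam Q} := by
        ext k
        simp only [mem_setOf_eq, mem_singleton_iff]
        constructor
        · rintro ⟨X, h1, h2, rfl⟩
          rw [subset_antisymm (hER ▸ h2) h1]
        · rintro rfl
          exact ⟨Q, Subset.rfl, by rw [hER], rfl⟩
      rw [kappa, hset, csInf_singleton]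
    · obtain ⟨e, heE, heQR⟩ := not_subset.mp hE
      have hgd : (M.E \ {e}) \ (Q ∪ R) = (M.E \ (Q ∪ R)) \ {e} := diff_diff_comm
      have hlt : ((M.E \ (Q ∪ R)) \ {e}).ncard < n := by
        rw [← hcard]
        exact Set.ncard_diff_singleton_lt_of_mem ⟨heE, heQR⟩ M.ground_finite.diff
      have hQ' : Q ⊆ M.E \ {e} := subset_diff_singleton hQ (fun h => heQR (Or.inl h))
      have hR' : R ⊆ M.E \ {e} := subset_diff_singleton hR (fun h => heQR (Or.inr h))
      rcases kappa_del_or_con hQ hR hQR heE heQR with hk | hk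
      · have hde : (M.del {e}).kappa Q R = M.kappa Q R :=
          le_antisymm (kappa_del_le hQ hQR heE heQR) hk
        obtain ⟨N, hN1, hN2, hN3⟩ := IH _ hlt (M.del {e}) (del_finite {e}) Q R
          (by rw [del_ground]; exact hQ') (by rw [del_ground]; exact hR') hQR
          (by rw [del_ground, hgd])
        exact ⟨N, minor_of_minor_del heE hN1, hN2, by rw [hN3, hde]⟩
      · have hde : (M.con {e}).kappa Q R = M.kappa Q R :=
          le_antisymm (kappa_con_le hQ hQR heE heQR) hk
        obtain ⟨N, hN1, hN2, hN3⟩ := IH _ hlt (M.con {e}) (con_finite {e}) Q R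
          (by rw [con_ground]; exact hQ') (by rw [con_ground]; exact hR') hQR
          (by rw [con_ground, hgd])
        exact ⟨N, minor_of_minor_con heE hN1, hN2, by rw [hN3, hde]⟩
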